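/- For a 2×2 upper triangular complex matrix R̂ = [[a, b], [0, c]] with |a| ≥ |c|, the operator 2-norm of R̂ is at most √(|a|² + |a||b| + |b|²). -/

import Mathlib

noncomputable def l2norm (A : Matrix (Fin 2) (Fin 2) ℂ) : ℝ :=
  ‖Matrix.toEuclideanCLM (𝕜 := ℂ) (n := Fin 2) A‖

lemma euclid_norm_sq_two (v : EuclideanSpace ℂ (Fin 2)) :
    ‖v‖ ^ 2 = ‖v 0‖ ^ 2 + ‖v 1‖ ^ 2 := by
  rw [EuclideanSpace.norm_eq, Real.sq_sqrt (by positivity)]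
  simp [Fin.sum_univ_two]

theorem stmt9 (a b c : ℂ) (h : ‖c‖ ≤ ‖a‖) :
    l2norm !![a, b; 0, c] ≤
      Real.sqrt (‖a‖ ^ 2 + ‖a‖ * ‖b‖ + ‖b‖ ^ 2) := by
  unfold l2norm
  set E : ℝ := ‖a‖ ^ 2 + ‖a‖ * ‖b‖ + ‖b‖ ^ 2 with hE
  have hEnn : 0 ≤ E := by positivity
  apply ContinuousLinearMap.opNorm_le_bound _ (Real.sqrt_nonneg _)
  intro x
  set A := !![a, b; 0, c] with hA
  set y := Matrix.toEuclideanCLM (𝕜 := ℂ) (n := Fin 2) A x with hy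
  have hyv : ∀ i, y i = A.mulVec (⇑(WithLp.equiv 2 _) x) i := by
    intro i
    exact congrFun (Matrix.ofLp_toEuclideanCLM (𝕜 := ℂ) (n := Fin 2) A x) i
  have h0 : y 0 = a * x 0 + b * x 1 := by
    rw [hyv 0]
    simp [hA, Matrix.mulVec, dotProduct, Fin.sum_univ_two, Matrix.vecHead,
      Matrix.vecTail]
  have h1 : y 1 = c * x 1 := by
    rw [hyv 1]
    simp [hA, Matrix.mulVec, dotProduct, Fin.sum_univ_two, Matrix.vecHead,
      Matrix.vecTail]
  have hxn : ‖x‖ ^ 2 = ‖x 0‖ ^ 2 + ‖x 1‖ ^ 2 := euclid_norm_sq_two x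
  have hyn : ‖y‖ ^ 2 = ‖y 0‖ ^ 2 + ‖y 1‖ ^ 2 := euclid_norm_sq_two y
  have key : ‖y‖ ^ 2 ≤ E * ‖x‖ ^ 2 := by
    rw [hyn, hxn, h0, h1, hE]
    have htri : ‖a * x 0 + b * x 1‖ ≤
        ‖a‖ * ‖x 0‖ + ‖b‖ * ‖x 1‖ := by
      calc ‖a * x 0 + b * x 1‖ ≤ ‖a * x 0‖ + ‖b * x 1‖ := norm_add_le _ _
        _ = ‖a‖ * ‖x 0‖ + ‖b‖ * ‖x 1‖ := by
          simp [map_mul]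
    have hcx : ‖c * x 1‖ = ‖c‖ * ‖x 1‖ := by
      simp [map_mul]
    rw [hcx]
    have h2 : ‖a * x 0 + b * x 1‖ ^ 2 ≤
        (‖a‖ * ‖x 0‖ + ‖b‖ * ‖x 1‖) ^ 2 :=
      pow_le_pow_left₀ (norm_nonneg _) htri 2
    have hc2 : ‖c‖ ^ 2 ≤ ‖a‖ ^ 2 :=
      pow_le_pow_left₀ (norm_nonneg c) h 2
    nlinarith [mul_le_mul_of_nonneg_right hc2 (sq_nonneg (‖x 1‖)),
      mul_nonneg (mul_nonneg (norm_nonneg a) (norm_nonneg b))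
        (sq_nonneg (‖x 0‖ - ‖x 1‖)),
      mul_nonneg (mul_nonneg (norm_nonneg b) (norm_nonneg b))
        (sq_nonneg (‖x 0‖))]
  calc ‖y‖ = Real.sqrt (‖y‖ ^ 2) := (Real.sqrt_sq (norm_nonneg y)).symm
    _ ≤ Real.sqrt (E * ‖x‖ ^ 2) := Real.sqrt_le_sqrt key
    _ = Real.sqrt E * ‖x‖ := by
        rw [Real.sqrt_mul hEnn, Real.sqrt_sq (norm_nonneg x)]
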